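/- Let X_μ ~ ESN(μ, σ², ε) with μ > 0, σ > 0, ε ∈ (−1,1), and let Z_μ = max(X_μ, 0). Then E[Z_μ] = μ − (1+ε)·Φ(−μ/((1+ε)σ))·μ + (1+ε)²·φ(−μ/((1+ε)σ))·σ − (4ε/√(2π))·σ. -/

import Mathlib

open MeasureTheory Real Set ProbabilityTheory

noncomputable def phi (t : ℝ) : ℝ := Real.exp (-t^2/2) / Real.sqrt (2*Real.pi)
noncomputable def Phi (t : ℝ) : ℝ := ∫ u in Set.Iic t, phi u

noncomputable def esnPdf (μ σ ε x : ℝ) : ℝ :=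
  if x < μ then phi ((x-μ) / ((1+ε)*σ)) / σ else phi ((x-μ) / ((1-ε)*σ)) / σ

lemma phi_cont : Continuous phi := by
  unfold phi; fun_prop

lemma phi_nonneg (t : ℝ) : 0 ≤ phi t := by
  unfold phi; positivity

lemma phi_eq (t : ℝ) : phi t = Real.exp (-(1/2) * t^2) / Real.sqrt (2*Real.pi) := by
  unfold phi; ring_nf

lemma phi_zero : phi 0 = 1 / Real.sqrt (2*Real.pi) := by
  norm_num [phi]

lemma phi_integrable : Integrable phi := by
  have h := (integrable_exp_neg_mul_sq (by norm_num : (0:ℝ) < 1/2)).div_const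
    (Real.sqrt (2*Real.pi))
  exact h.congr (Filter.Eventually.of_forall fun t => (phi_eq t).symm)

lemma integral_phi : ∫ t : ℝ, phi t = 1 := by
  have h1 : ∫ t : ℝ, phi t = (∫ t : ℝ, Real.exp (-(1/2) * t^2)) / Real.sqrt (2*Real.pi) := by
    rw [← integral_div]
    exact integral_congr_ae (Filter.Eventually.of_forall fun t => phi_eq t)
  rw [h1, integral_gaussian]
  have h2 : Real.pi / (1/2) = 2 * Real.pi := by ring
  rw [h2, div_self (by positivity)]

lemma hasDerivAt_phi (t : ℝ) : HasDerivAt phi (-t * phi t) t := by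
  have h1 : HasDerivAt (fun x : ℝ => -x^2/2) (-t) t := by
    have h := ((hasDerivAt_pow 2 t).neg).div_const 2
    refine h.congr_deriv ?_
    push_cast
    ring
  have h2 := (h1.exp).div_const (Real.sqrt (2*Real.pi))
  have e2 : Real.exp (-t^2/2) * -t / Real.sqrt (2*Real.pi) = -t * phi t := by
    unfold phi; ring
  rwa [e2] at h2

lemma Phi_eq (t : ℝ) : Phi t = Phi 0 + ∫ u in (0:ℝ)..t, phi u := by
  have h0 : (∫ u in Iic t, phi u) - ∫ u in Iic (0:ℝ), phi u = ∫ u in (0:ℝ)..t, phi u :=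
    intervalIntegral.integral_Iic_sub_Iic phi_integrable.integrableOn phi_integrable.integrableOn
  unfold Phi
  linarith

lemma hasDerivAt_Phi (x : ℝ) : HasDerivAt Phi (phi x) x := by
  have h : HasDerivAt (fun t => ∫ u in (0:ℝ)..t, phi u) (phi x) x :=
    intervalIntegral.integral_hasDerivAt_right phi_integrable.intervalIntegrable
      (phi_cont.stronglyMeasurableAtFilter _ _) phi_cont.continuousAt
  have h2 := (hasDerivAt_const x (Phi 0)).add h
  rw [zero_add] at h2
  have hfun : Phi = fun t => Phi 0 + ∫ u in (0:ℝ)..t, phi u := funext Phi_eq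
  rw [hfun]
  exact h2

lemma Phi_tendsto : Filter.Tendsto Phi Filter.atTop (nhds 1) := by
  have h1 : Filter.Tendsto (fun t : ℝ => ∫ u in (0:ℝ)..t, phi u) Filter.atTop
      (nhds (∫ u in Ioi (0:ℝ), phi u)) :=
    intervalIntegral_tendsto_integral_Ioi 0 phi_integrable.integrableOn Filter.tendsto_id
  have hfun : Phi = fun t => Phi 0 + ∫ u in (0:ℝ)..t, phi u := funext Phi_eq
  have hval : Phi 0 + ∫ u in Ioi (0:ℝ), phi u = 1 := by
    have h := intervalIntegral.integral_Iic_add_Ioi (b := (0:ℝ)) (f := phi)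
      phi_integrable.integrableOn phi_integrable.integrableOn
    rw [integral_phi] at h
    unfold Phi
    linarith
  rw [hfun, ← hval]
  exact (tendsto_const_nhds.add h1)

lemma Phi_zero : Phi 0 = 1/2 := by
  have heven : ∀ x : ℝ, phi (-x) = phi x := by
    intro x; unfold phi; rw [neg_sq]
  have h := integral_comp_neg_Ioi (c := (0:ℝ)) (f := phi)
  simp only [heven, neg_zero] at h
  have hadd := intervalIntegral.integral_Iic_add_Ioi (b := (0:ℝ)) (f := phi)
    phi_integrable.integrableOn phi_integrable.integrableOn
  rw [integral_phi] at hadd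
  unfold Phi
  linarith

lemma phi_tendsto_zero : Filter.Tendsto phi Filter.atTop (nhds 0) := by
  have h1 : Filter.Tendsto (fun t : ℝ => t^2/2) Filter.atTop Filter.atTop :=
    (Filter.tendsto_pow_atTop two_ne_zero).atTop_div_const (by norm_num)
  have h2 := Real.tendsto_exp_neg_atTop_nhds_zero.comp h1
  have h3 := h2.div_const (Real.sqrt (2*Real.pi))
  rw [zero_div] at h3
  have hfun : phi = fun t => Real.exp (-(t^2/2)) / Real.sqrt (2*Real.pi) := by
    funext t; unfold phi; rw [neg_div]
  rw [hfun]
  exact h3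

lemma hasDerivAt_F (a σ μ : ℝ) (ha : a ≠ 0) (hσ : σ ≠ 0) (x : ℝ) :
    HasDerivAt (fun y => a*μ * Phi ((y-μ)/(a*σ)) - a^2*σ * phi ((y-μ)/(a*σ)))
      (x * phi ((x-μ)/(a*σ)) / σ) x := by
  have hin : HasDerivAt (fun y : ℝ => (y-μ)/(a*σ)) (1/(a*σ)) x := by
    simpa using ((hasDerivAt_id x).sub_const μ).div_const (a*σ)
  have hPhi : HasDerivAt (fun y : ℝ => Phi ((y-μ)/(a*σ)))
      (phi ((x-μ)/(a*σ)) * (1/(a*σ))) x := (hasDerivAt_Phi _).comp x hin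
  have hphi : HasDerivAt (fun y : ℝ => phi ((y-μ)/(a*σ)))
      (-((x-μ)/(a*σ)) * phi ((x-μ)/(a*σ)) * (1/(a*σ))) x := (hasDerivAt_phi _).comp x hin
  have h := (hPhi.const_mul (a*μ)).sub (hphi.const_mul (a^2*σ))
  refine h.congr_deriv ?_
  field_simp
  ring

lemma tendsto_F (a σ μ : ℝ) (ha : 0 < a) (hσ : 0 < σ) :
    Filter.Tendsto (fun y => a*μ * Phi ((y-μ)/(a*σ)) - a^2*σ * phi ((y-μ)/(a*σ)))
      Filter.atTop (nhds (a*μ)) := by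
  have hlin : Filter.Tendsto (fun y : ℝ => (y-μ)/(a*σ)) Filter.atTop Filter.atTop := by
    apply Filter.Tendsto.atTop_div_const (by positivity)
    exact (Filter.tendsto_atTop_add_const_right _ (-μ) Filter.tendsto_id).congr
      (fun y => by simp [sub_eq_add_neg])
  have h1 := (Phi_tendsto.comp hlin).const_mul (a*μ)
  have h2 := (phi_tendsto_zero.comp hlin).const_mul (a^2*σ)
  have := h1.sub h2
  simpa using this

theorem stmt9 (μ σ ε : ℝ) (hμ : 0 < μ) (hσ : 0 < σ) (hε1 : -1 < ε) (hε2 : ε < 1) :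
    (∫ x : ℝ, max x 0 * esnPdf μ σ ε x)
      = μ - (1+ε) * Phi (-μ/((1+ε)*σ)) * μ + (1+ε)^2 * phi (-μ/((1+ε)*σ)) * σ
        - (4*ε / Real.sqrt (2*Real.pi)) * σ := by
  have hb : (0:ℝ) < 1+ε := by linarith
  have ha : (0:ℝ) < 1-ε := by linarith
  set f : ℝ → ℝ := fun x => max x 0 * esnPdf μ σ ε x with hf
  set gb : ℝ → ℝ := fun x => x * phi ((x-μ)/((1+ε)*σ)) / σ with hgb
  set ga : ℝ → ℝ := fun x => x * phi ((x-μ)/((1-ε)*σ)) / σ with hga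
  set Fb : ℝ → ℝ := fun y => (1+ε)*μ * Phi ((y-μ)/((1+ε)*σ))
      - (1+ε)^2*σ * phi ((y-μ)/((1+ε)*σ)) with hFb
  set Fa : ℝ → ℝ := fun y => (1-ε)*μ * Phi ((y-μ)/((1-ε)*σ))
      - (1-ε)^2*σ * phi ((y-μ)/((1-ε)*σ)) with hFa
  -- pointwise identifications
  have hf0 : EqOn f (fun _ => (0:ℝ)) (Iic 0) := fun x hx => by
    simp only [hf, max_eq_right (mem_Iic.mp hx), zero_mul]
  have hf1 : EqOn f gb (Ioc 0 μ) := by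
    intro x hx
    simp only [hf, hgb, max_eq_left hx.1.le]
    rcases lt_or_eq_of_le hx.2 with h | h
    · rw [esnPdf, if_pos h]; ring
    · subst h
      rw [esnPdf, if_neg (lt_irrefl _), sub_self, zero_div, zero_div]
      ring
  have hf2 : EqOn f ga (Ioi μ) := by
    intro x hx
    simp only [hf, hga, max_eq_left (le_of_lt (lt_trans hμ hx))]
    rw [esnPdf, if_neg (not_lt.mpr (le_of_lt hx))]
    ring
  -- continuity of gb
  have hcontb : Continuous gb := by
    apply Continuous.div_const
    exact continuous_id.mul (phi_cont.comp (by fun_prop))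
  -- derivative facts
  have hderb : ∀ x : ℝ, HasDerivAt Fb (gb x) x :=
    fun x => hasDerivAt_F (1+ε) σ μ (ne_of_gt hb) (ne_of_gt hσ) x
  have hdera : ∀ x : ℝ, HasDerivAt Fa (ga x) x :=
    fun x => hasDerivAt_F (1-ε) σ μ (ne_of_gt ha) (ne_of_gt hσ) x
  have htenda : Filter.Tendsto Fa Filter.atTop (nhds ((1-ε)*μ)) :=
    tendsto_F (1-ε) σ μ ha hσ
  have hposa : ∀ x ∈ Ioi μ, 0 ≤ ga x := by
    intro x hx
    have hx0 : 0 < x := lt_trans hμ hx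
    simp only [hga]
    have := phi_nonneg ((x-μ)/((1-ε)*σ))
    positivity
  -- value of the Ioi integral
  have I_Ioi : ∫ x in Ioi μ, ga x = (1-ε)*μ - Fa μ :=
    integral_Ioi_of_hasDerivAt_of_nonneg ((hdera μ).continuousAt.continuousWithinAt)
      (fun x _ => hdera x) hposa htenda
  have int_ga : IntegrableOn ga (Ioi μ) :=
    integrableOn_Ioi_deriv_of_nonneg ((hdera μ).continuousAt.continuousWithinAt)
      (fun x hx => hdera x) hposa htenda
  -- value of the Ioc integral
  have I_Ioc : ∫ x in Ioc 0 μ, gb x = Fb μ - Fb 0 := by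
    rw [← intervalIntegral.integral_of_le hμ.le]
    exact intervalIntegral.integral_eq_sub_of_hasDerivAt (fun x _ => hderb x)
      (hcontb.intervalIntegrable 0 μ)
  -- integrability of f
  have intf_Iic : IntegrableOn f (Iic 0) :=
    (integrableOn_congr_fun hf0 measurableSet_Iic).mpr ((integrableOn_const_iff (C := (0:ℝ))).mpr (Or.inl (by simp)))
  have intf_Ioc : IntegrableOn f (Ioc 0 μ) :=
    (integrableOn_congr_fun hf1 measurableSet_Ioc).mpr (hcontb.integrableOn_Ioc)
  have intf_Ioi : IntegrableOn f (Ioi μ) :=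
    (integrableOn_congr_fun hf2 measurableSet_Ioi).mpr int_ga
  have intf_Ioi0 : IntegrableOn f (Ioi 0) := by
    rw [← Ioc_union_Ioi_eq_Ioi hμ.le]
    exact intf_Ioc.union intf_Ioi
  -- split the integral
  have hsplit : (∫ x : ℝ, f x) = (∫ x in Iic (0:ℝ), f x) + ∫ x in Ioi (0:ℝ), f x :=
    (intervalIntegral.integral_Iic_add_Ioi intf_Iic intf_Ioi0).symm
  have hIic : (∫ x in Iic (0:ℝ), f x) = 0 := by
    rw [setIntegral_congr_fun measurableSet_Iic hf0]
    simp
  have hIoi0 : (∫ x in Ioi (0:ℝ), f x) = (∫ x in Ioc 0 μ, f x) + ∫ x in Ioi μ, f x := by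
    rw [← Ioc_union_Ioi_eq_Ioi hμ.le,
      setIntegral_union (Ioc_disjoint_Ioi le_rfl) measurableSet_Ioi intf_Ioc intf_Ioi]
  have hIoc_f : (∫ x in Ioc 0 μ, f x) = ∫ x in Ioc 0 μ, gb x :=
    setIntegral_congr_fun measurableSet_Ioc hf1
  have hIoi_f : (∫ x in Ioi μ, f x) = ∫ x in Ioi μ, ga x :=
    setIntegral_congr_fun measurableSet_Ioi hf2
  have key : (∫ x : ℝ, f x) = (Fb μ - Fb 0) + ((1-ε)*μ - Fa μ) := by
    rw [hsplit, hIic, hIoi0, hIoc_f, hIoi_f, I_Ioc, I_Ioi]; ring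
  rw [key]
  -- evaluate F at the endpoints
  have e0 : (μ - μ)/((1+ε)*σ) = 0 := by rw [sub_self, zero_div]
  have e0' : (μ - μ)/((1-ε)*σ) = 0 := by rw [sub_self, zero_div]
  have e1 : (0 - μ)/((1+ε)*σ) = -μ/((1+ε)*σ) := by rw [zero_sub]
  simp only [hFb, hFa, e0, e0', e1, Phi_zero, phi_zero]
  have hs : Real.sqrt (2*Real.pi) ≠ 0 := by positivity
  field_simp
  ring
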